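/- For the 1-D DAPI-controlled platoon, the H2-norm density p̂(θ) = 1/(4g₀f₊(1-cos θ) + 2(c₀g₀f₊ + 2c₀f₊a₊(1-cos θ))/(f₊ + a₊g₀ + 2a₊²(1-cos θ))) with parameters f₊, g₀, c₀, a₊ > 0 is uniformly bounded on [-π,π]: there exists M > 0 with 0 < p̂(θ) ≤ M for all θ ∈ [-π,π], and in particular p̂(0) = (f₊ + a₊g₀)/(2c₀g₀f₊) is finite. -/

import Mathlib

/-- The H2-norm density of the 1-D DAPI-controlled platoon is uniformly bounded on
`[-π,π]` (full coherence), with `p̂(0) = (f₊ + a₊g₀)/(2c₀g₀f₊)`. -/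
theorem stmt_16 (fp g0 c0 ap : ℝ) (hfp : 0 < fp) (hg0 : 0 < g0) (hc0 : 0 < c0) (hap : 0 < ap)
    (p : ℝ → ℝ)
    (hp : ∀ θ : ℝ, p θ = 1 / (4 * g0 * fp * (1 - Real.cos θ) +
      2 * (c0 * g0 * fp + 2 * c0 * fp * ap * (1 - Real.cos θ)) /
        (fp + ap * g0 + 2 * ap ^ 2 * (1 - Real.cos θ)))) :
    (∃ M : ℝ, 0 < M ∧ ∀ θ ∈ Set.Icc (-Real.pi) Real.pi, 0 < p θ ∧ p θ ≤ M) ∧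
      p 0 = (fp + ap * g0) / (2 * c0 * g0 * fp) := by
  have hR : (0:ℝ) < fp + ap * g0 + 4 * ap ^ 2 := by positivity
  have hden0 : (0:ℝ) < 2 * c0 * g0 * fp := by positivity
  constructor
  · refine ⟨(fp + ap * g0 + 4 * ap ^ 2) / (2 * c0 * g0 * fp), by positivity, ?_⟩
    intro θ _
    set s := 1 - Real.cos θ with hsdef
    clear_value s
    have hs0 : 0 ≤ s := by
      have := Real.cos_le_one θ; simp [hsdef]; linarith
    have hs2 : s ≤ 2 := by
      have := Real.neg_one_le_cos θ; simp [hsdef]; linarith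
    have hQ : (0:ℝ) < fp + ap * g0 + 2 * ap ^ 2 * s := by positivity
    have hQR : fp + ap * g0 + 2 * ap ^ 2 * s ≤ fp + ap * g0 + 4 * ap ^ 2 := by nlinarith
    have hnum : 2 * c0 * g0 * fp ≤ 2 * (c0 * g0 * fp + 2 * c0 * fp * ap * s) := by
      nlinarith [mul_nonneg (mul_nonneg (mul_nonneg hc0.le hfp.le) hap.le) hs0]
    have hT : (2 * c0 * g0 * fp) / (fp + ap * g0 + 4 * ap ^ 2) ≤
        2 * (c0 * g0 * fp + 2 * c0 * fp * ap * s) / (fp + ap * g0 + 2 * ap ^ 2 * s) := by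
      apply div_le_div₀ (by positivity) hnum hQ hQR
    have hD : (2 * c0 * g0 * fp) / (fp + ap * g0 + 4 * ap ^ 2) ≤
        4 * g0 * fp * s + 2 * (c0 * g0 * fp + 2 * c0 * fp * ap * s) /
          (fp + ap * g0 + 2 * ap ^ 2 * s) := by
      exact le_add_of_nonneg_of_le (by positivity) hT
    have hDpos : (0:ℝ) < 4 * g0 * fp * s + 2 * (c0 * g0 * fp + 2 * c0 * fp * ap * s) /
          (fp + ap * g0 + 2 * ap ^ 2 * s) := lt_of_lt_of_le (by positivity) hD
    rw [hp θ, ← hsdef]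
    constructor
    · exact one_div_pos.mpr hDpos
    · calc 1 / (4 * g0 * fp * s + 2 * (c0 * g0 * fp + 2 * c0 * fp * ap * s) /
            (fp + ap * g0 + 2 * ap ^ 2 * s))
          ≤ 1 / ((2 * c0 * g0 * fp) / (fp + ap * g0 + 4 * ap ^ 2)) :=
            one_div_le_one_div_of_le (by positivity) hD
        _ = (fp + ap * g0 + 4 * ap ^ 2) / (2 * c0 * g0 * fp) := one_div_div _ _
  · rw [hp 0]
    have hQ0 : (0:ℝ) < fp + ap * g0 := by positivity
    rw [Real.cos_zero]
    field_simp
    ring
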